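/- For the probability mass function on {-1,1}^{I×Ĩ} given by P(x, x̃) ∝ exp(Σ_{edges (s,t)} β_{st}(x_s x_t + x̃_s x̃_t + x_s x̃_t + x̃_s x_t) + Σ_s α_s (x_s + x̃_s)), the marginal distribution of x is in general not of the Ising form P(x) ∝ exp(Σ_{edges} β_{st} x_s x_t + Σ_s α_s x_s). In particular, for a single-edge graph on two sites with β ≠ 0, the marginal of (x_1, x_2) under the naive symmetric joint differs from the two-site Ising distribution with parameter β. -/

import Mathlib

open Finset

/-- The spin value of a site: `true ↦ 1`, `false ↦ -1`. -/
def spin (b : Bool) : ℝ := if b then 1 else -1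

/-- **The naive symmetric joint does not have Ising marginals.** For the
two-site Ising model with one edge, interaction `β ≠ 0` and no external field,
the marginal of `(x₁, x₂)` under the naive joint distribution
`P(x, x̃) ∝ exp(β(x₁x₂ + x̃₁x̃₂ + x₁x̃₂ + x̃₁x₂))` differs from the Ising
distribution `P(x) ∝ exp(β x₁ x₂)`. -/
theorem stmt18 (β : ℝ) (hβ : β ≠ 0) :
    ¬ (∀ a b : Bool,
      (∑ c : Bool, ∑ d : Bool,
          Real.exp (β * (spin a * spin b + spin c * spin d +
            spin a * spin d + spin c * spin b))) /
        (∑ a' : Bool, ∑ b' : Bool, ∑ c : Bool, ∑ d : Bool,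
          Real.exp (β * (spin a' * spin b' + spin c * spin d +
            spin a' * spin d + spin c * spin b'))) =
      Real.exp (β * (spin a * spin b)) /
        (∑ a' : Bool, ∑ b' : Bool, Real.exp (β * (spin a' * spin b')))) := by
  intro h
  have h1 := h true true
  simp only [spin, Fintype.sum_bool, if_true, if_false] at h1
  norm_num at h1
  have ht : (0:ℝ) < Real.exp β := Real.exp_pos β
  set t := Real.exp β with htdef
  have e4 : Real.exp (β*4) = t^4 := by
    rw [mul_comm]; exact_mod_cast Real.exp_nat_mul β 4
  have en4 : Real.exp (-(β*4)) = (t^4)⁻¹ := by rw [Real.exp_neg, e4]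
  have en1 : Real.exp (-β) = t⁻¹ := Real.exp_neg β
  rw [e4, en4, en1] at h1
  have htne : t ≠ 0 := ne_of_gt ht
  have ht1 : t ≠ 1 := by
    intro he
    exact hβ (Real.exp_injective (by rw [← htdef, he, Real.exp_zero]))
  field_simp at h1
  have key : 2 * t^2 * (t^2 - 1)^3 = 0 := by linear_combination t^2 * h1
  have h2 : (t^2 - 1)^3 = 0 := by
    rcases mul_eq_zero.mp key with h' | h'
    · exact absurd h' (by positivity)
    · exact h'
  have h3 : t^2 - 1 = 0 := by
    exact pow_eq_zero_iff (by norm_num) |>.mp h2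
  exact ht1 (by nlinarith)
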